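/- Let (φ_j) denote the Fibonacci numbers (φ_0 = 0, φ_1 = 1, φ_{j+2} = φ_{j+1} + φ_j). For every odd integer j ≥ 5, setting d := φ_j, the numerical semigroup Γ generated by φ_{j−2} and φ_{j+2} satisfies the semigroup distribution property for d: for every integer l ≥ 1 the half-open interval ((l − 1)d, ld] contains exactly min(l + 1, d) elements of Γ. -/
import Mathlib


/-- `Γ` satisfies the semigroup distribution property for `d`: for every
`l ≥ 1` the half-open interval `((l−1)d, ld]` contains exactly
`min (l+1) d` elements of `Γ`. -/
def SemigroupDistributionProperty (Γ : Set ℕ) (d : ℕ) : Prop :=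
  ∀ l : ℕ, 1 ≤ l →
    {k : ℕ | k ∈ Γ ∧ (l - 1) * d < k ∧ k ≤ l * d}.ncard = min (l + 1) d

open Nat


lemma ncard_mul_Ioc (a m n : ℕ) (ha : 0 < a) :
    {k : ℕ | a ∣ k ∧ m < k ∧ k ≤ n}.ncard = n / a - m / a := by
  have hinj : Function.Injective (fun x : ℕ => a * x) :=
    fun x y h => Nat.eq_of_mul_eq_mul_left ha h
  have hset : {k : ℕ | a ∣ k ∧ m < k ∧ k ≤ n} = (fun x => a * x) '' Set.Ioc (m / a) (n / a) := by
    ext k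
    simp only [Set.mem_setOf_eq, Set.mem_image, Set.mem_Ioc]
    constructor
    · rintro ⟨⟨x, rfl⟩, h1, h2⟩
      refine ⟨x, ⟨?_, ?_⟩, rfl⟩
      · rw [Nat.div_lt_iff_lt_mul ha, mul_comm]; exact h1
      · rw [Nat.le_div_iff_mul_le ha, mul_comm]; exact h2
    · rintro ⟨x, ⟨h1, h2⟩, rfl⟩
      rw [Nat.div_lt_iff_lt_mul ha, mul_comm] at h1
      rw [Nat.le_div_iff_mul_le ha, mul_comm] at h2
      exact ⟨⟨x, rfl⟩, h1, h2⟩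
  rw [hset, Set.ncard_image_of_injective _ hinj, ← Finset.coe_Ioc, Set.ncard_coe_finset,
    Nat.card_Ioc]

lemma div_key_aux (a b d l q1 r1 q2 r2 : ℤ) (ha : 1 ≤ a) (hb : 1 ≤ b)
    (hsum : a + b = 3 * d) (hprod : a * b = d ^ 2 + 1) (hl1 : 1 ≤ l) (hld : l + 1 ≤ d)
    (e1 : a * q1 + r1 = l * d) (e2 : b * q2 + r2 = l * d)
    (hr10 : 0 ≤ r1) (hr1 : r1 < a) (hr20 : 0 ≤ r2) (hr2 : r2 < b) :
    q1 + q2 = 3 * l - 1 := by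
  have key : b * r1 + a * r2 + 3 * l = (a * b) * (3 * l - q1 - q2) := by
    linear_combination b * e1 + a * e2 + l * d * hsum - 3 * l * hprod
  have u1 : b * r1 ≤ b * (a - 1) := by nlinarith
  have u2 : a * r2 ≤ a * (b - 1) := by nlinarith
  have hub : (a * b) * (3 * l - q1 - q2) ≤ 2 * (a * b) - 3 := by linarith
  have hlb : 0 < (a * b) * (3 * l - q1 - q2) := by nlinarith
  have habpos : (0 : ℤ) < a * b := by positivity
  have hK1 : 3 * l - q1 - q2 = 1 := by
    rcases lt_trichotomy (3 * l - q1 - q2) 1 with h | h | h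
    · nlinarith
    · exact h
    · nlinarith
  linarith

lemma div_key (a b d l : ℕ) (ha : 0 < a) (hb : 0 < b) (hsum : a + b = 3 * d)
    (hprod : a * b = d ^ 2 + 1) (hl1 : 1 ≤ l) (hl2 : l + 1 ≤ d) :
    l * d / a + l * d / b = 3 * l - 1 := by
  have key : (↑(l * d / a) : ℤ) + ↑(l * d / b) = 3 * (l : ℤ) - 1 := by
    refine div_key_aux (a : ℤ) b d l _ (↑(l * d % a)) _ (↑(l * d % b)) ?_ ?_ ?_ ?_ ?_ ?_ ?_ ?_ ?_ ?_ ?_ ?_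
    · exact_mod_cast ha
    · exact_mod_cast hb
    · exact_mod_cast hsum
    · exact_mod_cast hprod
    · exact_mod_cast hl1
    · exact_mod_cast hl2
    · exact_mod_cast Nat.div_add_mod (l * d) a
    · exact_mod_cast Nat.div_add_mod (l * d) b
    · positivity
    · exact_mod_cast Nat.mod_lt _ ha
    · positivity
    · exact_mod_cast Nat.mod_lt _ hb
  omega

lemma rep_of_frobenius_lt (a b k : ℕ) (ha : 1 < a) (hb : 1 < b) (hcop : Nat.Coprime a b)
    (hk : a * b - a - b < k) : ∃ x y : ℕ, k = x * a + y * b := by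
  have hF := frobeniusNumber_pair hcop ha hb
  by_contra h
  push_neg at h
  have hmem : k ∈ {k | k ∉ AddSubmonoid.closure ({a, b} : Set ℕ)} := by
    intro hc
    rw [AddSubmonoid.mem_closure_pair] at hc
    obtain ⟨x, y, hxy⟩ := hc
    exact h x y (by simpa [smul_eq_mul, mul_comm] using hxy.symm)
  have := hF.2 hmem
  omega


lemma fib_sum_id (k : ℕ) : fib k + fib (k + 4) = 3 * fib (k + 2) := by
  have h2 : fib (k + 2) = fib k + fib (k + 1) := fib_add_two
  have h3 : fib (k + 3) = fib (k + 1) + fib (k + 2) := fib_add_two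
  have h4 : fib (k + 4) = fib (k + 2) + fib (k + 3) := fib_add_two
  omega

lemma cassini (n : ℕ) : (fib (n + 1) : ℤ) ^ 2 - fib n * fib (n + 2) = (-1) ^ n := by
  induction n with
  | zero => simp
  | succ n ih =>
    have h2 : (fib (n + 2) : ℤ) = fib n + fib (n + 1) := by exact_mod_cast fib_add_two
    have h3 : (fib (n + 3) : ℤ) = fib (n + 1) + fib (n + 2) := by
      exact_mod_cast (fib_add_two (n := n + 1))
    show (fib (n + 2) : ℤ) ^ 2 - fib (n + 1) * fib (n + 3) = (-1) ^ (n + 1)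
    linear_combination (-(fib (n + 1) : ℤ)) * h3 + (-1 : ℤ) * ih + (fib (n + 2) : ℤ) * h2

lemma fib_prod_id (k : ℕ) (hk : Odd k) : fib k * fib (k + 4) = fib (k + 2) ^ 2 + 1 := by
  have hcas := cassini (k + 1)
  have hpow : ((-1 : ℤ)) ^ (k + 1) = 1 := (hk.add_one).neg_one_pow
  rw [hpow] at hcas
  have h1' : (fib (k + 2) : ℤ) ^ 2 - fib (k + 1) * fib (k + 3) = 1 := hcas
  have e2 : (fib (k + 2) : ℤ) = fib k + fib (k + 1) := by exact_mod_cast fib_add_two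
  have e3 : (fib (k + 3) : ℤ) = fib (k + 1) + fib (k + 2) := by
    exact_mod_cast (fib_add_two (n := k + 1))
  have e4 : (fib (k + 4) : ℤ) = fib (k + 2) + fib (k + 3) := by
    exact_mod_cast (fib_add_two (n := k + 2))
  have key : (fib k : ℤ) * fib (k + 4) = (fib (k + 2) : ℤ) ^ 2 + 1 := by
    linear_combination (fib k : ℤ) * e4 + h1'
      + (-(fib (k + 2) : ℤ) - (fib (k + 3) : ℤ)) * e2 + (fib (k + 2) : ℤ) * e3
  exact_mod_cast key

lemma fib_coprime_id (k : ℕ) (hk : Odd k) : Nat.Coprime (fib k) (fib (k + 4)) := by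
  have hg : Nat.Coprime k (k + 4) := by
    rw [Nat.add_comm, Nat.coprime_add_self_right]
    exact Nat.Coprime.pow_right 2 (hk.coprime_two_right)
  have h : Nat.gcd (fib k) (fib (k + 4)) = fib (Nat.gcd k (k + 4)) := (fib_gcd k (k + 4)).symm
  unfold Nat.Coprime
  rw [h, hg, fib_one]

lemma count_main (a b d : ℕ) (ha : 2 ≤ a) (hab : a < b) (hsum : a + b = 3 * d)
    (hprod : a * b = d ^ 2 + 1) (hcop : Nat.Coprime a b) :
    ∀ m : ℕ, m + 3 ≤ d →
      {k : ℕ | (∃ x y : ℕ, k = x * a + y * b) ∧ m * d < k ∧ k ≤ (m + 1) * d}.ncard = m + 2 := by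
  have hd2 : 2 ≤ d := by omega
  have had : a < d := by
    by_contra h
    push_neg at h
    have h1 : a * (a + 1) ≤ a * b := Nat.mul_le_mul (le_refl a) (by omega)
    have h2 : d * (d + 1) ≤ a * (a + 1) := Nat.mul_le_mul h (by omega)
    have e1 : d * (d + 1) = d * d + d := by ring
    have e2 : d ^ 2 = d * d := pow_two d
    omega
  have hdb2 : 2 * d < b := by omega
  intro m
  induction m using Nat.strong_induction_on with
  | _ m IH =>
    intro hm
    -- common facts
    have hAc : {k : ℕ | a ∣ k ∧ m * d < k ∧ k ≤ (m + 1) * d}.ncard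
        = (m + 1) * d / a - m * d / a := ncard_mul_Ioc a (m * d) ((m + 1) * d) (by omega)
    have hBc : {k : ℕ | b ∣ k ∧ m * d < k ∧ k ≤ (m + 1) * d}.ncard
        = (m + 1) * d / b - m * d / b := ncard_mul_Ioc b (m * d) ((m + 1) * d) (by omega)
    have finA : {k : ℕ | a ∣ k ∧ m * d < k ∧ k ≤ (m + 1) * d}.Finite :=
      (Set.finite_Ioc (m * d) ((m + 1) * d)).subset
        (fun k hk => Set.mem_Ioc.mpr ⟨hk.2.1, hk.2.2⟩)
    have finB : {k : ℕ | b ∣ k ∧ m * d < k ∧ k ≤ (m + 1) * d}.Finite :=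
      (Set.finite_Ioc (m * d) ((m + 1) * d)).subset
        (fun k hk => Set.mem_Ioc.mpr ⟨hk.2.1, hk.2.2⟩)
    have hABdisj : Disjoint {k : ℕ | a ∣ k ∧ m * d < k ∧ k ≤ (m + 1) * d}
        {k : ℕ | b ∣ k ∧ m * d < k ∧ k ≤ (m + 1) * d} := by
      rw [Set.disjoint_left]
      rintro k ⟨hka, hk1, hk2⟩ ⟨hkb, -, -⟩
      have h := Nat.Coprime.mul_dvd_of_dvd_of_dvd hcop hka hkb
      have hle := Nat.le_of_dvd (by omega) h
      have h2 : (m + 1) * d ≤ d * d := mul_le_mul_left (by omega) d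
      have h3 : d ^ 2 = d * d := pow_two d
      omega
    have hdivm1 : (m + 1) * d / a + (m + 1) * d / b = 3 * (m + 1) - 1 :=
      div_key a b d (m + 1) (by omega) (by omega) hsum hprod (by omega) (by omega)
    have hmono_a : m * d / a ≤ (m + 1) * d / a :=
      Nat.div_le_div_right (mul_le_mul_left (by omega) d)
    have hmono_b : m * d / b ≤ (m + 1) * d / b :=
      Nat.div_le_div_right (mul_le_mul_left (by omega) d)
    by_cases hm0 : m = 0
    · subst hm0
      have hset : {k : ℕ | (∃ x y : ℕ, k = x * a + y * b) ∧ 0 * d < k ∧ k ≤ (0 + 1) * d}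
          = {k : ℕ | a ∣ k ∧ 0 * d < k ∧ k ≤ (0 + 1) * d}
            ∪ {k : ℕ | b ∣ k ∧ 0 * d < k ∧ k ≤ (0 + 1) * d} := by
        ext k
        simp only [Set.mem_setOf_eq, Set.mem_union]
        constructor
        · rintro ⟨⟨x, y, rfl⟩, h1, h2⟩
          rcases Nat.eq_zero_or_pos y with rfl | hy
          · exact Or.inl ⟨⟨x, by ring⟩, h1, h2⟩
          · exfalso
            have hb2 : b ≤ y * b := Nat.le_mul_of_pos_left b hy
            have h3 : y * b ≤ x * a + y * b := Nat.le_add_left _ _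
            have h4 : (0 + 1) * d ≤ 2 * d := by omega
            linarith
        · rintro (⟨⟨x, hx⟩, h1, h2⟩ | ⟨⟨y, hy⟩, h1, h2⟩)
          · exact ⟨⟨x, 0, by rw [hx]; ring⟩, h1, h2⟩
          · exact ⟨⟨0, y, by rw [hy]; ring⟩, h1, h2⟩
      rw [hset, Set.ncard_union_eq hABdisj finA finB, hAc, hBc]
      have e0a : 0 * d / a = 0 := by simp
      have e0b : 0 * d / b = 0 := by simp
      omega
    · by_cases hm1 : m = 1
      · subst hm1
        have hset : {k : ℕ | (∃ x y : ℕ, k = x * a + y * b) ∧ 1 * d < k ∧ k ≤ (1 + 1) * d}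
            = {k : ℕ | a ∣ k ∧ 1 * d < k ∧ k ≤ (1 + 1) * d}
              ∪ {k : ℕ | b ∣ k ∧ 1 * d < k ∧ k ≤ (1 + 1) * d} := by
          ext k
          simp only [Set.mem_setOf_eq, Set.mem_union]
          constructor
          · rintro ⟨⟨x, y, rfl⟩, h1, h2⟩
            rcases Nat.eq_zero_or_pos y with rfl | hy
            · exact Or.inl ⟨⟨x, by ring⟩, h1, h2⟩
            · exfalso
              have hb2 : b ≤ y * b := Nat.le_mul_of_pos_left b hy
              have h3 : y * b ≤ x * a + y * b := Nat.le_add_left _ _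
              have h4 : (1 + 1) * d ≤ 2 * d := by omega
              linarith
          · rintro (⟨⟨x, hx⟩, h1, h2⟩ | ⟨⟨y, hy⟩, h1, h2⟩)
            · exact ⟨⟨x, 0, by rw [hx]; ring⟩, h1, h2⟩
            · exact ⟨⟨0, y, by rw [hy]; ring⟩, h1, h2⟩
        rw [hset, Set.ncard_union_eq hABdisj finA finB, hAc, hBc]
        have hdiv1 : 1 * d / a + 1 * d / b = 3 * 1 - 1 :=
          div_key a b d 1 (by omega) (by omega) hsum hprod (by omega) (by omega)
        omega
      by_cases hm2 : m = 2
      · subst hm2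
        have h3dmem : (3 * d : ℕ) ∈ {k : ℕ | (∃ x y : ℕ, k = x * a + y * b)} := by
          exact ⟨1, 1, by rw [one_mul, one_mul]; omega⟩
        have hset : {k : ℕ | (∃ x y : ℕ, k = x * a + y * b) ∧ 2 * d < k ∧ k ≤ (2 + 1) * d}
            = ({k : ℕ | a ∣ k ∧ 2 * d < k ∧ k ≤ (2 + 1) * d}
              ∪ {k : ℕ | b ∣ k ∧ 2 * d < k ∧ k ≤ (2 + 1) * d}) ∪ {3 * d} := by
          ext k
          simp only [Set.mem_setOf_eq, Set.mem_union, Set.mem_singleton_iff]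
          constructor
          · rintro ⟨⟨x, y, rfl⟩, h1, h2⟩
            rcases Nat.eq_zero_or_pos y with rfl | hy
            · exact Or.inl (Or.inl ⟨⟨x, by ring⟩, h1, h2⟩)
            rcases Nat.eq_zero_or_pos x with rfl | hx
            · exact Or.inl (Or.inr ⟨⟨y, by ring⟩, h1, h2⟩)
            · right
              have ha2 : a ≤ x * a := Nat.le_mul_of_pos_left a hx
              have hb2 : b ≤ y * b := Nat.le_mul_of_pos_left b hy
              have e : (2 + 1) * d = 3 * d := by ring
              have h5 : 3 * d ≤ x * a + y * b := by linarith
              linarith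
          · rintro (((⟨⟨x, hx⟩, h1, h2⟩ | ⟨⟨y, hy⟩, h1, h2⟩)) | rfl)
            · exact ⟨⟨x, 0, by rw [hx]; ring⟩, h1, h2⟩
            · exact ⟨⟨0, y, by rw [hy]; ring⟩, h1, h2⟩
            · exact ⟨⟨1, 1, by rw [one_mul, one_mul]; omega⟩, by omega, by omega⟩
        have hA3 : Disjoint {k : ℕ | a ∣ k ∧ 2 * d < k ∧ k ≤ (2 + 1) * d} ({3 * d} : Set ℕ) := by
          rw [Set.disjoint_left]
          rintro k ⟨hka, -, -⟩ hk3
          rw [Set.mem_singleton_iff] at hk3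
          subst hk3
          have h1 : a ∣ a + b := by rw [hsum]; exact hka
          have h2 : a ∣ b := (Nat.dvd_add_right (dvd_refl a)).mp h1
          have h3 : a = 1 := Nat.Coprime.eq_one_of_dvd hcop h2
          omega
        have hB3 : Disjoint {k : ℕ | b ∣ k ∧ 2 * d < k ∧ k ≤ (2 + 1) * d} ({3 * d} : Set ℕ) := by
          rw [Set.disjoint_left]
          rintro k ⟨hkb, -, -⟩ hk3
          rw [Set.mem_singleton_iff] at hk3
          subst hk3
          have h1 : b ∣ a + b := by rw [hsum]; exact hkb
          have h2 : b ∣ a := by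
            have := Nat.dvd_sub h1 (dvd_refl b)
            rwa [Nat.add_sub_cancel] at this
          have := Nat.le_of_dvd (by omega) h2
          omega
        rw [hset, Set.ncard_union_eq (Set.disjoint_union_left.mpr ⟨hA3, hB3⟩)
            (finA.union finB) (Set.finite_singleton _),
          Set.ncard_union_eq hABdisj finA finB, hAc, hBc, Set.ncard_singleton]
        have hdiv2 : 2 * d / a + 2 * d / b = 3 * 2 - 1 :=
          div_key a b d 2 (by omega) (by omega) hsum hprod (by omega) (by omega)
        omega
      · -- m ≥ 3
        obtain ⟨n, rfl⟩ : ∃ n, m = n + 3 := ⟨m - 3, by omega⟩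
        have e1 : (n + 3) * d = n * d + 3 * d := by ring
        have e2 : (n + 3 + 1) * d = (n + 1) * d + 3 * d := by ring
        set Sn := {k : ℕ | (∃ x y : ℕ, k = x * a + y * b) ∧ n * d < k ∧ k ≤ (n + 1) * d}
          with hSn
        have finSn : Sn.Finite :=
          (Set.finite_Ioc (n * d) ((n + 1) * d)).subset
            (fun k hk => Set.mem_Ioc.mpr ⟨hk.2.1, hk.2.2⟩)
        have hCcard : ((fun k => k + 3 * d) '' Sn).ncard = n + 2 := by
          rw [Set.ncard_image_of_injective _ (add_left_injective (3 * d))]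
          exact IH n (by omega) (by omega)
        have hset : {k : ℕ | (∃ x y : ℕ, k = x * a + y * b) ∧ (n + 3) * d < k ∧ k ≤ (n + 3 + 1) * d}
            = ({k : ℕ | a ∣ k ∧ (n + 3) * d < k ∧ k ≤ (n + 3 + 1) * d}
              ∪ {k : ℕ | b ∣ k ∧ (n + 3) * d < k ∧ k ≤ (n + 3 + 1) * d})
              ∪ ((fun k => k + 3 * d) '' Sn) := by
          ext k
          simp only [hSn, Set.mem_setOf_eq, Set.mem_union, Set.mem_image]
          constructor
          · rintro ⟨⟨x, y, rfl⟩, h1, h2⟩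
            rcases Nat.eq_zero_or_pos y with rfl | hy
            · exact Or.inl (Or.inl ⟨⟨x, by ring⟩, h1, h2⟩)
            rcases Nat.eq_zero_or_pos x with rfl | hx
            · exact Or.inl (Or.inr ⟨⟨y, by ring⟩, h1, h2⟩)
            · right
              obtain ⟨x', rfl⟩ : ∃ x', x = x' + 1 := ⟨x - 1, by omega⟩
              obtain ⟨y', rfl⟩ : ∃ y', y = y' + 1 := ⟨y - 1, by omega⟩
              have hk : (x' + 1) * a + (y' + 1) * b = x' * a + y' * b + 3 * d := by
                rw [← hsum]; ring
              exact ⟨x' * a + y' * b, ⟨⟨x', y', rfl⟩, by linarith, by linarith⟩, hk.symm⟩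
          · rintro ((⟨⟨x, hx⟩, h1, h2⟩ | ⟨⟨y, hy⟩, h1, h2⟩)
              | ⟨m', ⟨⟨u, v, rfl⟩, hm'1, hm'2⟩, rfl⟩)
            · exact ⟨⟨x, 0, by rw [hx]; ring⟩, h1, h2⟩
            · exact ⟨⟨0, y, by rw [hy]; ring⟩, h1, h2⟩
            · refine ⟨⟨u + 1, v + 1, by rw [← hsum]; ring⟩, by linarith, by linarith⟩
        have hAC : Disjoint {k : ℕ | a ∣ k ∧ (n + 3) * d < k ∧ k ≤ (n + 3 + 1) * d}
            ((fun k => k + 3 * d) '' Sn) := by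
          rw [Set.disjoint_left]
          rintro k ⟨hka, hk1, hk2⟩ ⟨m', ⟨⟨u, v, rfl⟩, -, -⟩, rfl⟩
          have hk : u * a + v * b + 3 * d = (u + 1) * a + (v + 1) * b := by
            rw [← hsum]; ring
          have h2 : a ∣ (u + 1) * a + (v + 1) * b := hk ▸ hka
          have hdvd : a ∣ (v + 1) * b := by
            have h3 : a ∣ (u + 1) * a := Dvd.intro_left _ rfl
            have := Nat.dvd_sub h2 h3
            rwa [Nat.add_sub_cancel_left] at this
          have hdvd2 : a ∣ v + 1 := hcop.dvd_of_dvd_mul_right hdvd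
          have h3 : a ≤ v + 1 := Nat.le_of_dvd (by omega) hdvd2
          have h4 : a * b ≤ (v + 1) * b := mul_le_mul_left h3 b
          have h5 : (v + 1) * b ≤ (u + 1) * a + (v + 1) * b := Nat.le_add_left _ _
          have h6 : (n + 3 + 1) * d ≤ d * d := mul_le_mul_left (by omega) d
          have h7 : d ^ 2 = d * d := pow_two d
          have h8 : u * a + v * b + 3 * d ≤ (n + 3 + 1) * d := hk2
          linarith
        have hBC : Disjoint {k : ℕ | b ∣ k ∧ (n + 3) * d < k ∧ k ≤ (n + 3 + 1) * d}
            ((fun k => k + 3 * d) '' Sn) := by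
          rw [Set.disjoint_left]
          rintro k ⟨hkb, hk1, hk2⟩ ⟨m', ⟨⟨u, v, rfl⟩, -, -⟩, rfl⟩
          have hk : u * a + v * b + 3 * d = (u + 1) * a + (v + 1) * b := by
            rw [← hsum]; ring
          have h2 : b ∣ (u + 1) * a + (v + 1) * b := hk ▸ hkb
          have hdvd : b ∣ (u + 1) * a := by
            have h3 : b ∣ (v + 1) * b := Dvd.intro_left _ rfl
            have := Nat.dvd_sub h2 h3
            rwa [Nat.add_sub_cancel] at this
          have hdvd2 : b ∣ u + 1 := hcop.symm.dvd_of_dvd_mul_right hdvd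
          have h3 : b ≤ u + 1 := Nat.le_of_dvd (by omega) hdvd2
          have h4 : b * a ≤ (u + 1) * a := mul_le_mul_left h3 a
          have h5 : (u + 1) * a ≤ (u + 1) * a + (v + 1) * b := Nat.le_add_right _ _
          have h6 : (n + 3 + 1) * d ≤ d * d := mul_le_mul_left (by omega) d
          have h7 : d ^ 2 = d * d := pow_two d
          have h8 : u * a + v * b + 3 * d ≤ (n + 3 + 1) * d := hk2
          have h9 : b * a = a * b := mul_comm b a
          linarith
        rw [hset, Set.ncard_union_eq (Set.disjoint_union_left.mpr ⟨hAC, hBC⟩)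
            (finA.union finB) (finSn.image _),
          Set.ncard_union_eq hABdisj finA finB, hAc, hBc, hCcard]
        have hdivm : (n + 3) * d / a + (n + 3) * d / b = 3 * (n + 3) - 1 :=
          div_key a b d (n + 3) (by omega) (by omega) hsum hprod (by omega) (by omega)
        omega

theorem key_abstract (a b d : ℕ) (ha : 2 ≤ a) (hab : a < b) (hsum : a + b = 3 * d)
    (hprod : a * b = d ^ 2 + 1) (hcop : Nat.Coprime a b) :
    SemigroupDistributionProperty {n : ℕ | ∃ x y : ℕ, n = x * a + y * b} d := by
  intro l hl
  have hd2 : 2 ≤ d := by omega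
  by_cases hld : l + 2 ≤ d
  · rw [min_eq_left (by omega)]
    obtain ⟨m, rfl⟩ : ∃ m, l = m + 1 := ⟨l - 1, by omega⟩
    have h := count_main a b d ha hab hsum hprod hcop m (by omega)
    simpa only [Nat.add_sub_cancel, Set.mem_setOf_eq] using h
  · rw [min_eq_right (by omega)]
    have hrep : ∀ k : ℕ, (l - 1) * d < k → ∃ x y : ℕ, k = x * a + y * b := by
      intro k hk
      apply rep_of_frobenius_lt a b k (by omega) (by omega) hcop
      have h1 : (d - 2) * d ≤ (l - 1) * d := mul_le_mul_left (by omega) d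
      have h2 : (d - 2) * d = d * d - 2 * d := by rw [Nat.sub_mul]
      have h3 : d ^ 2 = d * d := pow_two d
      omega
    have hset : {k : ℕ | k ∈ {n : ℕ | ∃ x y : ℕ, n = x * a + y * b}
        ∧ (l - 1) * d < k ∧ k ≤ l * d} = Set.Ioc ((l - 1) * d) (l * d) := by
      ext k
      simp only [Set.mem_setOf_eq, Set.mem_Ioc]
      exact ⟨fun ⟨_, h⟩ => h, fun h => ⟨hrep k h.1, h⟩⟩
    rw [hset, ← Finset.coe_Ioc, Set.ncard_coe_finset, Nat.card_Ioc]
    have e1 : (l - 1) * d = l * d - 1 * d := by rw [Nat.sub_mul]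
    have e2 : 1 * d ≤ l * d := mul_le_mul_left (by omega) d
    have e3 : 1 * d = d := one_mul d
    omega


/-- Case (d) of the classification: for odd `j ≥ 5` and `d = φ_j`, the
semigroup `⟨φ_{j−2}, φ_{j+2}⟩` satisfies the semigroup distribution property
for `d`. -/
theorem distribution_property_case_d (j : ℕ) (hodd : Odd j) (hj : 5 ≤ j) :
    SemigroupDistributionProperty
      {n : ℕ | ∃ x y : ℕ, n = x * Nat.fib (j - 2) + y * Nat.fib (j + 2)}
      (Nat.fib j) := by
  obtain ⟨k, rfl⟩ : ∃ k, j = k + 2 := ⟨j - 2, by omega⟩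
  have hk3 : 3 ≤ k := by omega
  have hkodd : Odd k := by
    rcases hodd with ⟨t, ht⟩
    exact ⟨t - 1, by omega⟩
  have h1 : k + 2 - 2 = k := by omega
  have h2 : k + 2 + 2 = k + 4 := by omega
  rw [h1, h2]
  have hsum : fib k + fib (k + 4) = 3 * fib (k + 2) := fib_sum_id k
  have hprod : fib k * fib (k + 4) = fib (k + 2) ^ 2 + 1 := fib_prod_id k hkodd
  have hcop : Nat.Coprime (fib k) (fib (k + 4)) := fib_coprime_id k hkodd
  have ha : 2 ≤ fib k := by
    calc 2 = fib 3 := rfl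
    _ ≤ fib k := fib_mono hk3
  have hab : fib k < fib (k + 4) := by
    have e2 : fib (k + 2) = fib k + fib (k + 1) := fib_add_two
    have e3 : fib (k + 3) = fib (k + 1) + fib (k + 2) := fib_add_two
    have e4 : fib (k + 4) = fib (k + 2) + fib (k + 3) := fib_add_two
    have hp : 0 < fib (k + 1) := fib_pos.mpr (by omega)
    omega
  exact key_abstract _ _ _ ha hab hsum hprod hcop
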